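/- Convexity inequality for the variance functional in the focusing discrete Klein–Gordon equation: Let d ≥ 1, h > 0, σ > 0, λ = −1, and let V = {V_n} ∈ l^∞_h be a real-valued potential with inf_{n∈hℤ^d} V_n > 0. Let (f,g) ∈ l²_h × l²_h be real-valued with E(f,g) < 0, and let u : [0,T) → l²_h be a twice continuously differentiable solution of ∂_t² u_n − (Δ_h u)_n + V_n u_n − |u_n|^{2σ} u_n = 0 with u(0) = f, ∂_t u(0) = g. Define I(t) = Σ_{n∈hℤ^d} u_n(t)². Then I is twice differentiable on [0,T) and for all t ∈ [0,T), I''(t) ≥ (4 + 2σ) Σ_{n∈hℤ^d} (∂_t u_n(t))². -/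

import Mathlib

noncomputable section

open scoped ENNReal

/-- The integer lattice indexing `hℤ^d` (the point `n ∈ hℤ^d` corresponds to `h • n`). -/
abbrev ZLat (d : ℕ) := Fin d → ℤ

/-- The `j`-th standard basis vector of the lattice. -/
def latE {d : ℕ} (j : Fin d) : ZLat d := Pi.single j 1

/-- The discrete Laplacian `Δ_h` on real-valued sequences on `hℤ^d`, acting pointwise:
`(Δ_h u)_n = h⁻² Σ_j (u_{n+he_j} + u_{n−he_j} − 2u_n)`. -/
def discLapR (d : ℕ) (h : ℝ) (u : ZLat d → ℝ) : ZLat d → ℝ :=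
  fun n => (∑ j : Fin d, (u (n + latE j) + u (n - latE j) - 2 * u n)) / h ^ 2

/-- `u : ℝ → l^p_h` (real-valued) is a twice continuously differentiable solution
(with first and second derivatives `u'`, `u''`) of the discrete nonlinear Klein–Gordon equation
`∂_t² u_n(t) − (Δ_h u(t))_n + V_n u_n(t) + λ |u_n(t)|^{2σ} u_n(t) = 0` on the set `S ⊆ ℝ`. -/
def IsDKGSolutionOn (d : ℕ) (h σ lam : ℝ) (V : ZLat d → ℝ) (p : ℝ≥0∞) [Fact (1 ≤ p)]
    (S : Set ℝ) (u u' u'' : ℝ → lp (fun _ : ZLat d => ℝ) p) : Prop :=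
  (∀ t ∈ S, HasDerivWithinAt u (u' t) S t) ∧
  (∀ t ∈ S, HasDerivWithinAt u' (u'' t) S t) ∧
  ContinuousOn u'' S ∧
    ∀ t ∈ S, ∀ n : ZLat d,
      (u'' t : ZLat d → ℝ) n - discLapR d h (⇑(u t)) n + V n * (u t : ZLat d → ℝ) n
        + lam * |(u t : ZLat d → ℝ) n| ^ (2 * σ) * (u t : ZLat d → ℝ) n = 0

/-- The conserved energy of the discrete nonlinear Klein–Gordon equation:
`E(u,v) = ½ Σ_n ( v_n² + h⁻² Σ_j (u_{n+he_j} − u_n)² + V_n u_n² + (λ/(σ+1)) |u_n|^{2σ+2} )`. -/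
def energyKG (d : ℕ) (h σ lam : ℝ) (V : ZLat d → ℝ) (u v : ZLat d → ℝ) : ℝ :=
  (1 / 2) * ∑' n : ZLat d,
    (v n ^ 2 + (∑ j : Fin d, (u (n + latE j) - u n) ^ 2) / h ^ 2 + V n * u n ^ 2
      + (lam / (σ + 1)) * |u n| ^ (2 * σ + 2))

variable {d : ℕ}

local notation "H" => lp (fun _ : ZLat d => ℝ) 2

lemma memℓp_two_iff (f : ZLat d → ℝ) :
    Memℓp f 2 ↔ Summable (fun n => f n ^ 2) := by
  rw [memℓp_gen_iff (p := 2) (by norm_num)]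
  constructor <;> intro hs <;>
  · refine hs.congr (fun n => ?_)
    rw [show ((2:ℝ≥0∞).toReal) = ((2:ℕ):ℝ) by norm_num, Real.rpow_natCast]
    simp [Real.norm_eq_abs, sq_abs]

lemma summable_sq (x : H) : Summable (fun n => x n ^ 2) :=
  (memℓp_two_iff _).1 (lp.memℓp x)

lemma summable_mul_of_memℓp {f g : ZLat d → ℝ} (hf : Memℓp f 2) (hg : Memℓp g 2) :
    Summable (fun n => f n * g n) := by
  have := lp.summable_inner (𝕜 := ℝ) (⟨f, hf⟩ : H) (⟨g, hg⟩ : H)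
  exact (by simpa [RCLike.inner_apply] using this : Summable fun i => g i * f i).congr
    fun n => mul_comm _ _

lemma summable_mul_lp (x y : H) : Summable (fun n => x n * y n) :=
  summable_mul_of_memℓp (lp.memℓp x) (lp.memℓp y)

lemma inner_lp_eq (x y : H) : (inner ℝ x y : ℝ) = ∑' n, x n * y n := by
  rw [lp.inner_eq_tsum]
  simp [RCLike.inner_apply]
  exact tsum_congr fun n => mul_comm _ _

lemma inner_self_lp (x : H) : (inner ℝ x x : ℝ) = ∑' n, x n ^ 2 := by
  rw [inner_lp_eq]
  exact tsum_congr fun n => (sq (x n)).symm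

lemma norm_sq_lp (x : H) : ‖x‖ ^ 2 = ∑' n, x n ^ 2 := by
  rw [← inner_self_lp, real_inner_self_eq_norm_sq]

lemma summable_shift (F : ZLat d → ℝ) (hF : Summable F) (e : ZLat d) :
    Summable (fun n => F (n + e)) := by
  have h2 : Summable (F ∘ (Equiv.addRight e)) := ((Equiv.addRight e).summable_iff).2 hF
  simpa [Function.comp_def, Equiv.coe_addRight] using h2

lemma memℓp_shift {x : ZLat d → ℝ} (hx : Memℓp x 2) (e : ZLat d) :
    Memℓp (fun n => x (n + e)) 2 := by
  rw [memℓp_two_iff] at hx ⊢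
  exact summable_shift _ hx e

lemma tsum_shift (F : ZLat d → ℝ) (e : ZLat d) : ∑' n, F (n + e) = ∑' n, F n := by
  have := (Equiv.addRight e).tsum_eq F
  simpa [Equiv.coe_addRight] using this

/-! ### Shift operator -/

lemma memℓp_of_sq_le {f g : ZLat d → ℝ} (hg : Memℓp g 2) (hle : ∀ n, f n ^ 2 ≤ g n ^ 2) :
    Memℓp f 2 := by
  rw [memℓp_two_iff] at hg ⊢
  exact Summable.of_nonneg_of_le (fun n => sq_nonneg _) hle hg

def shiftL (e : ZLat d) : H →ₗ[ℝ] H where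
  toFun x := ⟨fun n => x (n + e), memℓp_shift (lp.memℓp x) e⟩
  map_add' x y := by ext n; simp; rfl
  map_smul' c x := by ext n; simp

@[simp] lemma shiftL_apply (e : ZLat d) (x : H) (n : ZLat d) :
    (shiftL e x : ZLat d → ℝ) n = x (n + e) := rfl

lemma norm_shiftL (e : ZLat d) (x : H) : ‖shiftL e x‖ = ‖x‖ := by
  have h2 : ‖shiftL e x‖ ^ 2 = ‖x‖ ^ 2 := by
    rw [norm_sq_lp, norm_sq_lp]
    exact tsum_shift (fun n => x n ^ 2) e
  calc ‖shiftL e x‖ = Real.sqrt (‖shiftL e x‖ ^ 2) := (Real.sqrt_sq (norm_nonneg _)).symm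
    _ = Real.sqrt (‖x‖ ^ 2) := by rw [h2]
    _ = ‖x‖ := Real.sqrt_sq (norm_nonneg _)

def shiftCLM (e : ZLat d) : H →L[ℝ] H :=
  (shiftL e).mkContinuous 1 (fun x => by rw [norm_shiftL]; simp)

@[simp] lemma shiftCLM_apply (e : ZLat d) (x : H) (n : ZLat d) :
    (shiftCLM e x : ZLat d → ℝ) n = x (n + e) := rfl

/-! ### Multiplication operator -/

def mulVL (V : ZLat d → ℝ) (CV : ℝ) (hV : ∀ n, |V n| ≤ CV) : H →ₗ[ℝ] H where
  toFun x := ⟨fun n => V n * x n, by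
    refine memℓp_of_sq_le (f := fun n => V n * x n)
      ((lp.memℓp x).const_smul (CV : ℝ)) (fun n => ?_)
    have h1 : (V n * x n) ^ 2 ≤ CV ^ 2 * x n ^ 2 := by
      rw [mul_pow]
      apply mul_le_mul_of_nonneg_right _ (sq_nonneg _)
      calc V n ^ 2 = |V n| ^ 2 := (sq_abs _).symm
        _ ≤ CV ^ 2 := by
            apply pow_le_pow_left₀ (abs_nonneg _) (hV n)
    simpa [smul_eq_mul, mul_pow] using h1⟩
  map_add' x y := by ext n; simp; exact mul_add _ _ _
  map_smul' c x := by ext n; simp; ring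

@[simp] lemma mulVL_apply (V : ZLat d → ℝ) (CV : ℝ) (hV : ∀ n, |V n| ≤ CV) (x : H) (n : ZLat d) :
    (mulVL V CV hV x : ZLat d → ℝ) n = V n * x n := rfl

lemma norm_mulVL_le (V : ZLat d → ℝ) (CV : ℝ) (hV : ∀ n, |V n| ≤ CV) (x : H) :
    ‖mulVL V CV hV x‖ ≤ CV * ‖x‖ := by
  have hCV : 0 ≤ CV := le_trans (abs_nonneg _) (hV 0)
  have h2 : ‖mulVL V CV hV x‖ ^ 2 ≤ (CV * ‖x‖) ^ 2 := by
    rw [norm_sq_lp, mul_pow, norm_sq_lp, ← tsum_mul_left]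
    refine ((memℓp_two_iff _).1 (lp.memℓp (mulVL V CV hV x))).tsum_le_tsum (fun n => ?_)
      ((summable_sq x).mul_left _)
    show (V n * x n) ^ 2 ≤ CV ^ 2 * x n ^ 2
    rw [mul_pow]
    exact mul_le_mul_of_nonneg_right
      (by calc V n ^ 2 = |V n| ^ 2 := (sq_abs _).symm
            _ ≤ CV ^ 2 := pow_le_pow_left₀ (abs_nonneg _) (hV n) 2) (sq_nonneg _)
  calc ‖mulVL V CV hV x‖ = Real.sqrt (‖mulVL V CV hV x‖ ^ 2) := (Real.sqrt_sq (norm_nonneg _)).symm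
    _ ≤ Real.sqrt ((CV * ‖x‖) ^ 2) := Real.sqrt_le_sqrt h2
    _ = CV * ‖x‖ := Real.sqrt_sq (by positivity)

def mulVCLM (V : ZLat d → ℝ) (CV : ℝ) (hV : ∀ n, |V n| ≤ CV) : H →L[ℝ] H :=
  (mulVL V CV hV).mkContinuous CV (norm_mulVL_le V CV hV)

@[simp] lemma mulVCLM_apply (V : ZLat d → ℝ) (CV : ℝ) (hV : ∀ n, |V n| ≤ CV) (x : H)
    (n : ZLat d) : (mulVCLM V CV hV x : ZLat d → ℝ) n = V n * x n := rfl

/-! ### Summation by parts -/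

lemma memℓp_shift_sub {x : ZLat d → ℝ} (hx : Memℓp x 2) (e : ZLat d) :
    Memℓp (fun n => x (n - e)) 2 := by
  simpa [sub_eq_add_neg] using memℓp_shift hx (-e)

lemma sbp (x y : H) (e : ZLat d) :
    ∑' n, (x (n + e) - x n) * (y (n + e) - y n)
      = - ∑' n, y n * (x (n + e) + x (n - e) - 2 * x n) := by
  have mx : Memℓp (fun n => x (n + e)) 2 := memℓp_shift (lp.memℓp x) e
  have mx' : Memℓp (fun n => x (n - e)) 2 := memℓp_shift_sub (lp.memℓp x) e
  have my : Memℓp (fun n => y (n + e)) 2 := memℓp_shift (lp.memℓp y) e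
  have s1 : Summable (fun n => x (n + e) * y (n + e)) := summable_mul_of_memℓp mx my
  have s2 : Summable (fun n => x (n + e) * y n) := summable_mul_of_memℓp mx (lp.memℓp y)
  have s3 : Summable (fun n => x n * y (n + e)) := summable_mul_of_memℓp (lp.memℓp x) my
  have s4 : Summable (fun n => x n * y n) := summable_mul_of_memℓp (lp.memℓp x) (lp.memℓp y)
  have s5 : Summable (fun n => x (n - e) * y n) := summable_mul_of_memℓp mx' (lp.memℓp y)
  have hS1 : ∑' n, x (n + e) * y (n + e) = ∑' n, x n * y n :=
    tsum_shift (fun n => x n * y n) e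
  have hS5 : ∑' n, x (n - e) * y n = ∑' n, x n * y (n + e) := by
    have := tsum_shift (fun n => x (n - e) * y n) e
    simpa using this.symm
  have eL : ∑' n, (x (n + e) - x n) * (y (n + e) - y n)
      = (∑' n, x (n + e) * y (n + e)) - (∑' n, x (n + e) * y n)
        - ((∑' n, x n * y (n + e)) - ∑' n, x n * y n) := by
    rw [← Summable.tsum_sub s1 s2, ← Summable.tsum_sub s3 s4, ← Summable.tsum_sub (s1.sub s2) (s3.sub s4)]
    exact tsum_congr fun n => by ring
  have eR : ∑' n, y n * (x (n + e) + x (n - e) - 2 * x n)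
      = ((∑' n, x (n + e) * y n) + (∑' n, x (n - e) * y n)) - 2 * ∑' n, x n * y n := by
    rw [← tsum_mul_left, ← Summable.tsum_add s2 s5, ← Summable.tsum_sub (s2.add s5) (s4.mul_left 2)]
    exact tsum_congr fun n => by ring
  rw [eL, eR, hS1, hS5]
  ring

lemma inner_Adiff (x y : H) (e : ZLat d) :
    (inner ℝ ((shiftCLM e - 1) x) ((shiftCLM e - 1) y) : ℝ)
      = ∑' n, (x (n + e) - x n) * (y (n + e) - y n) := by
  rw [inner_lp_eq]
  refine tsum_congr fun n => ?_
  have hx : ((shiftCLM e - 1) x : ZLat d → ℝ) n = x (n + e) - x n := by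
    simp [ContinuousLinearMap.sub_apply]
  have hy : ((shiftCLM e - 1) y : ZLat d → ℝ) n = y (n + e) - y n := by
    simp [ContinuousLinearMap.sub_apply]
  rw [hx, hy]

lemma summable_lap_pair (x y : H) (e : ZLat d) :
    Summable (fun n => y n * (x (n + e) + x (n - e) - 2 * x n)) := by
  have mx : Memℓp (fun n => x (n + e)) 2 := memℓp_shift (lp.memℓp x) e
  have mx' : Memℓp (fun n => x (n - e)) 2 := memℓp_shift_sub (lp.memℓp x) e
  have s2 : Summable (fun n => y n * x (n + e)) := summable_mul_of_memℓp (lp.memℓp y) mx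
  have s5 : Summable (fun n => y n * x (n - e)) := summable_mul_of_memℓp (lp.memℓp y) mx'
  have s4 : Summable (fun n => y n * x n) := summable_mul_lp y x
  have := (s2.add s5).sub (s4.mul_left 2)
  refine this.congr fun n => ?_
  ring

lemma summable_mul_lap (x y : H) (h : ℝ) :
    Summable (fun n => y n * discLapR d h x n) := by
  have : Summable (fun n => y n * (∑ j : Fin d, (x (n + latE j) + x (n - latE j) - 2 * x n))) := by
    have : Summable (fun n => ∑ j : Fin d, y n * (x (n + latE j) + x (n - latE j) - 2 * x n)) :=
      summable_sum fun j _ => summable_lap_pair x y (latE j)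
    exact this.congr fun n => by rw [Finset.mul_sum]
  refine (this.div_const (h ^ 2)).congr fun n => ?_
  simp [discLapR, mul_div_assoc]

lemma sum_inner_Adiff (x y : H) (h : ℝ) (hh : h ≠ 0) :
    (∑ j : Fin d, (inner ℝ ((shiftCLM (latE j) - 1) x) ((shiftCLM (latE j) - 1) y) : ℝ)) / h ^ 2
      = - ∑' n, y n * discLapR d h x n := by
  have hswap : ∑' n, y n * (∑ j : Fin d, (x (n + latE j) + x (n - latE j) - 2 * x n))
      = ∑ j : Fin d, ∑' n, y n * (x (n + latE j) + x (n - latE j) - 2 * x n) := by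
    rw [← Summable.tsum_finsetSum (fun j _ => summable_lap_pair x y (latE j))]
    exact tsum_congr fun n => by rw [Finset.mul_sum]
  have key : ∑ j : Fin d, (inner ℝ ((shiftCLM (latE j) - 1) x) ((shiftCLM (latE j) - 1) y) : ℝ)
      = - ∑' n, y n * (∑ j : Fin d, (x (n + latE j) + x (n - latE j) - 2 * x n)) := by
    rw [hswap, ← Finset.sum_neg_distrib]
    exact Finset.sum_congr rfl fun j _ => by
      rw [inner_Adiff, sbp]
  rw [key, neg_div, ← tsum_div_const, neg_inj]
  refine tsum_congr fun n => ?_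
  simp [discLapR, mul_div_assoc]

/-! ### Scalar calculus for the nonlinearity -/

lemma abs_rpow_two_mul (σ a : ℝ) : |a| ^ (2*σ) = (a^2)^σ := by
  have h1 : a^2 = |a| ^ ((2:ℕ):ℝ) := by rw [Real.rpow_natCast]; exact (sq_abs a).symm
  rw [h1, ← Real.rpow_mul (abs_nonneg a)]
  norm_num [mul_comm]

lemma abs_rpow_two_mul_add (σ a : ℝ) : |a| ^ (2*σ+2) = (a^2)^(σ+1) := by
  have h1 : a^2 = |a| ^ ((2:ℕ):ℝ) := by rw [Real.rpow_natCast]; exact (sq_abs a).symm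
  rw [h1, ← Real.rpow_mul (abs_nonneg a)]
  ring_nf

lemma hasDerivAt_phi (σ : ℝ) (hσ : 0 < σ) (a : ℝ) :
    HasDerivAt (fun b : ℝ => (b^2)^(σ+1)) ((2*σ+2) * ((a^2)^σ * a)) a := by
  have h1 : HasDerivAt (fun b : ℝ => b^2) (2*a) a := by simpa using hasDerivAt_pow 2 a
  have h3 := h1.rpow_const (p := σ+1) (Or.inr (by linarith))
  convert h3 using 1
  have : σ + 1 - 1 = σ := by ring
  rw [this]
  ring

lemma hasDerivAt_psi (σ : ℝ) (hσ : 0 < σ) (a : ℝ) :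
    HasDerivAt (fun b : ℝ => (b^2)^σ * b) ((2*σ+1) * (a^2)^σ) a := by
  rcases eq_or_ne a 0 with rfl | ha
  · rw [hasDerivAt_iff_tendsto_slope]
    have hval : (2*σ+1) * (((0:ℝ)^2)^σ) = 0 := by
      norm_num [Real.zero_rpow hσ.ne']
    rw [hval]
    have hcont : Filter.Tendsto (fun x : ℝ => (x^2)^σ) (nhds 0) (nhds 0) := by
      have h1 : Filter.Tendsto (fun x : ℝ => x^2) (nhds 0) (nhds 0) := by
        simpa using (continuous_pow 2).tendsto (0:ℝ)
      have h2 : ContinuousAt (fun y : ℝ => y ^ σ) 0 :=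
        Real.continuousAt_rpow_const 0 σ (Or.inr hσ.le)
      have := h2.tendsto.comp h1
      simpa [Real.zero_rpow hσ.ne', Function.comp_def] using this
    refine Filter.Tendsto.congr' ?_ (hcont.mono_left nhdsWithin_le_nhds)
    filter_upwards [self_mem_nhdsWithin] with x hx
    have hx0 : x ≠ 0 := hx
    rw [slope_def_field]
    field_simp
    ring
  · have hsq : (0:ℝ) < a^2 := by positivity
    have h1 : HasDerivAt (fun b : ℝ => (b^2)^σ) ((2*a) * σ * (a^2) ^ (σ-1)) a := by
      have hb : HasDerivAt (fun b : ℝ => b^2) (2*a) a := by simpa using hasDerivAt_pow 2 a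
      have h2 := hb.rpow_const (p := σ) (Or.inl hsq.ne')
      convert h2 using 1
    have h4 := h1.mul (hasDerivAt_id a)
    refine h4.congr_deriv ?_
    have key : (a^2:ℝ)^σ = (a^2)^(σ-1) * a^2 := by
      conv_lhs => rw [show σ = σ - 1 + 1 by ring]
      rw [Real.rpow_add_one hsq.ne']
    rw [id_eq, key]
    ring

lemma abs_le_of_mem_Icc {a b x : ℝ} (hx : x ∈ Set.Icc (a - |b|) (a + |b|)) :
    |x| ≤ |a| + |b| := by
  rcases hx with ⟨h1, h2⟩
  rw [abs_le]
  constructor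
  · have := neg_abs_le a; linarith
  · have := le_abs_self a; linarith

lemma rpow_sq_le_rpow_sq {x M : ℝ} (σ : ℝ) (hσ : 0 < σ) (hM : 0 ≤ M) (hx : |x| ≤ M) :
    (x^2)^σ ≤ (M^2)^σ :=
  Real.rpow_le_rpow (sq_nonneg x) (by nlinarith [abs_nonneg x, sq_abs x]) hσ.le

lemma taylor_bound (σ : ℝ) (hσ : 0 < σ) (a b : ℝ) :
    |((a+b)^2)^(σ+1) - (a^2)^(σ+1) - (2*σ+2) * ((a^2)^σ * a) * b|
      ≤ ((2*σ+2)*(2*σ+1) * ((|a|+|b|)^2)^σ) * b^2 := by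
  set s : Set ℝ := Set.Icc (a - |b|) (a + |b|) with hs_def
  have hconv : Convex ℝ s := convex_Icc _ _
  have ha_mem : a ∈ s := by
    constructor <;> [linarith [abs_nonneg b]; linarith [abs_nonneg b]]
  have hab_mem : a + b ∈ s := by
    constructor <;> [linarith [neg_abs_le b]; linarith [le_abs_self b]]
  set C₁ : ℝ := (2*σ+1) * ((|a|+|b|)^2)^σ with hC₁
  have hC₁nn : 0 ≤ C₁ := by
    apply mul_nonneg (by linarith)
    exact Real.rpow_nonneg (sq_nonneg _) σ
  -- Lipschitz bound for ψ on s
  have hlip : ∀ x ∈ s, ∀ y ∈ s, |((y^2)^σ * y) - ((x^2)^σ * x)| ≤ C₁ * |y - x| := by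
    intro x hx y hy
    have := hconv.norm_image_sub_le_of_norm_hasDerivWithin_le
      (f := fun b : ℝ => (b^2)^σ * b) (f' := fun x : ℝ => (2*σ+1) * (x^2)^σ) (C := C₁)
      (fun z hz => (hasDerivAt_psi σ hσ z).hasDerivWithinAt)
      (fun z hz => by
        rw [Real.norm_eq_abs, abs_mul]
        apply mul_le_mul
        · rw [abs_of_nonneg (by linarith : (0:ℝ) ≤ 2*σ+1)]
        · rw [abs_of_nonneg (Real.rpow_nonneg (sq_nonneg _) σ)]
          exact rpow_sq_le_rpow_sq σ hσ (by positivity) (abs_le_of_mem_Icc hz)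
        · exact abs_nonneg _
        · linarith)
      hx hy
    simpa [Real.norm_eq_abs] using this
  -- apply MVT to F
  have hF : ∀ z ∈ s, HasDerivWithinAt
      (fun x : ℝ => (x^2)^(σ+1) - (2*σ+2) * ((a^2)^σ * a) * x)
      ((2*σ+2) * ((z^2)^σ * z) - (2*σ+2) * ((a^2)^σ * a)) s z := by
    intro z hz
    have h1 := (hasDerivAt_phi σ hσ z).sub
      ((hasDerivAt_id z).const_mul ((2*σ+2) * ((a^2)^σ * a)))
    have h2 := h1.hasDerivWithinAt (s := s)
    rw [mul_one] at h2
    exact h2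
  have hbound : ∀ z ∈ s, ‖(2*σ+2) * ((z^2)^σ * z) - (2*σ+2) * ((a^2)^σ * a)‖
      ≤ (2*σ+2) * C₁ * |b| := by
    intro z hz
    rw [Real.norm_eq_abs, show (2*σ+2) * ((z^2)^σ * z) - (2*σ+2) * ((a^2)^σ * a)
      = (2*σ+2) * (((z^2)^σ * z) - ((a^2)^σ * a)) by ring, abs_mul,
      abs_of_nonneg (by linarith : (0:ℝ) ≤ 2*σ+2)]
    rw [mul_assoc]
    apply mul_le_mul_of_nonneg_left _ (by linarith : (0:ℝ) ≤ 2*σ+2)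
    calc |((z^2)^σ * z) - ((a^2)^σ * a)| ≤ C₁ * |z - a| := hlip a ha_mem z hz
      _ ≤ C₁ * |b| := by
          apply mul_le_mul_of_nonneg_left _ hC₁nn
          rw [abs_le]
          rcases hz with ⟨h1, h2⟩
          constructor <;> [linarith [neg_abs_le b]; linarith [le_abs_self b]]
  have key := hconv.norm_image_sub_le_of_norm_hasDerivWithin_le hF hbound ha_mem hab_mem
  rw [Real.norm_eq_abs] at key
  have hsimp : ((a+b)^2)^(σ+1) - (2*σ+2) * ((a^2)^σ * a) * (a+b)
      - ((a^2)^(σ+1) - (2*σ+2) * ((a^2)^σ * a) * a)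
      = ((a+b)^2)^(σ+1) - (a^2)^(σ+1) - (2*σ+2) * ((a^2)^σ * a) * b := by ring
  rw [hsimp] at key
  calc |((a+b)^2)^(σ+1) - (a^2)^(σ+1) - (2*σ+2) * ((a^2)^σ * a) * b|
      ≤ (2*σ+2) * C₁ * |b| * ‖a + b - a‖ := key
    _ = ((2*σ+2)*(2*σ+1) * ((|a|+|b|)^2)^σ) * b^2 := by
        rw [Real.norm_eq_abs, show a + b - a = b by ring, hC₁, ← sq_abs b]
        ring

/-! ### The nonlinearity functional -/

lemma rpow_succ_eq (σ t : ℝ) (hσ : 0 < σ) (ht : 0 ≤ t) : t ^ (σ+1) = t ^ σ * t := by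
  rcases eq_or_lt_of_le ht with h0 | hpos
  · rw [← h0, Real.zero_rpow (by linarith), Real.zero_rpow hσ.ne', mul_zero]
  · rw [Real.rpow_add_one hpos.ne']

lemma sq_apply_le_norm_sq (x : H) (n : ZLat d) : x n ^ 2 ≤ ‖x‖ ^ 2 := by
  have h := lp.norm_apply_le_norm (by norm_num : (2:ℝ≥0∞) ≠ 0) x n
  rw [Real.norm_eq_abs] at h
  nlinarith [abs_nonneg (x n), sq_abs (x n), norm_nonneg x]

lemma summable_phi (σ : ℝ) (hσ : 0 < σ) (x : H) :
    Summable (fun n => (x n ^ 2) ^ (σ+1)) := by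
  refine Summable.of_nonneg_of_le (fun n => Real.rpow_nonneg (sq_nonneg _) _) (fun n => ?_)
    ((summable_sq x).mul_left ((‖x‖^2)^σ))
  rw [rpow_succ_eq σ _ hσ (sq_nonneg _)]
  apply mul_le_mul_of_nonneg_right _ (sq_nonneg _)
  exact Real.rpow_le_rpow (sq_nonneg _) (sq_apply_le_norm_sq x n) hσ.le

lemma memℓp_wNL (σ : ℝ) (hσ : 0 < σ) (x : H) :
    Memℓp (fun n => (x n ^ 2) ^ σ * x n) 2 := by
  refine memℓp_of_sq_le ((lp.memℓp x).const_smul ((‖x‖^2)^σ : ℝ)) (fun n => ?_)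
  have h1 : ((x n ^ 2) ^ σ) ^ 2 ≤ ((‖x‖^2)^σ) ^ 2 := by
    apply pow_le_pow_left₀ (Real.rpow_nonneg (sq_nonneg _) _)
    exact Real.rpow_le_rpow (sq_nonneg _) (sq_apply_le_norm_sq x n) hσ.le
  have : ((x n ^ 2) ^ σ * x n) ^ 2 ≤ ((‖x‖^2)^σ) ^ 2 * x n ^ 2 := by
    rw [mul_pow]
    exact mul_le_mul_of_nonneg_right h1 (sq_nonneg _)
  simpa [smul_eq_mul, mul_pow] using this

def wNL (σ : ℝ) (hσ : 0 < σ) (x : H) : H := ⟨fun n => (x n ^ 2) ^ σ * x n, memℓp_wNL σ hσ x⟩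

@[simp] lemma wNL_apply (σ : ℝ) (hσ : 0 < σ) (x : H) (n : ZLat d) :
    (wNL σ hσ x : ZLat d → ℝ) n = (x n ^ 2) ^ σ * x n := rfl

lemma hasFDerivAt_Phi (σ : ℝ) (hσ : 0 < σ) (x : H) :
    HasFDerivAt (fun y : H => ∑' n, ((y n)^2)^(σ+1))
      ((2*σ+2) • (innerSL ℝ (wNL σ hσ x))) x := by
  rw [hasFDerivAt_iff_isLittleO_nhds_zero]
  rw [Asymptotics.isLittleO_iff]
  intro c hc
  set K : ℝ := (2*σ+2)*(2*σ+1)*((‖x‖+1)^2)^σ with hK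
  have hKnn : 0 ≤ K := by
    apply mul_nonneg (by nlinarith)
    exact Real.rpow_nonneg (sq_nonneg _) _
  have hδ : 0 < min 1 (c / (K+1)) := lt_min one_pos (div_pos hc (by linarith))
  filter_upwards [Metric.closedBall_mem_nhds (0 : H) hδ] with v hv
  rw [Metric.mem_closedBall, dist_zero_right] at hv
  have hv1 : ‖v‖ ≤ 1 := le_trans hv (min_le_left _ _)
  have hv2 : ‖v‖ ≤ c / (K+1) := le_trans hv (min_le_right _ _)
  -- rewrite the linear term
  have hlin : ((2*σ+2) • (innerSL ℝ (wNL σ hσ x))) v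
      = ∑' n, (2*σ+2) * ((x n ^ 2) ^ σ * x n * v n) := by
    rw [ContinuousLinearMap.smul_apply, innerSL_apply_apply, inner_lp_eq, smul_eq_mul,
      ← tsum_mul_left]
    exact tsum_congr fun n => by simp [wNL]
  have sA : Summable (fun n => ((x + v) n ^ 2) ^ (σ+1)) := summable_phi σ hσ (x+v)
  have sB : Summable (fun n => (x n ^ 2) ^ (σ+1)) := summable_phi σ hσ x
  have sC : Summable (fun n => (2*σ+2) * ((x n ^ 2) ^ σ * x n * v n)) := by
    exact ((summable_mul_lp (wNL σ hσ x) v).congr (fun n => by simp [mul_comm])).mul_left _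
  have herr : (fun n => ((x n + v n)^2)^(σ+1) - (x n ^2)^(σ+1)
      - (2*σ+2) * ((x n ^ 2) ^ σ * x n * v n)) =
      fun n => (((x+v) n)^2)^(σ+1) - (x n ^2)^(σ+1) - (2*σ+2) * ((x n ^ 2) ^ σ * x n * v n) := by
    funext n; rw [lp.coeFn_add]; rfl
  have hsplit : (∑' n, ((x + v) n ^ 2) ^ (σ+1)) - (∑' n, (x n ^ 2) ^ (σ+1))
      - ((2*σ+2) • (innerSL ℝ (wNL σ hσ x))) v
      = ∑' n, (((x n + v n)^2)^(σ+1) - (x n ^2)^(σ+1)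
          - (2*σ+2) * ((x n ^ 2) ^ σ * x n * v n)) := by
    rw [hlin, ← Summable.tsum_sub sA sB, ← Summable.tsum_sub (sA.sub sB) sC, herr]
  rw [hsplit]
  -- bound the error sum
  have hbnd : ∀ n, ‖((x n + v n)^2)^(σ+1) - (x n ^2)^(σ+1)
      - (2*σ+2) * ((x n ^ 2) ^ σ * x n * v n)‖ ≤ K * v n ^ 2 := by
    intro n
    rw [Real.norm_eq_abs]
    have h1 := taylor_bound σ hσ (x n) (v n)
    rw [show (2*σ+2) * ((x n ^2)^σ * x n) * v n = (2*σ+2) * ((x n ^ 2) ^ σ * x n * v n) by ring]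
      at h1
    refine le_trans h1 ?_
    apply mul_le_mul_of_nonneg_right _ (sq_nonneg _)
    rw [hK]
    apply mul_le_mul_of_nonneg_left _ (by nlinarith)
    apply Real.rpow_le_rpow (sq_nonneg _) _ hσ.le
    have hxn : |x n| ≤ ‖x‖ := by
      have := lp.norm_apply_le_norm (by norm_num : (2:ℝ≥0∞) ≠ 0) x n
      rwa [Real.norm_eq_abs] at this
    have hvn : |v n| ≤ ‖v‖ := by
      have := lp.norm_apply_le_norm (by norm_num : (2:ℝ≥0∞) ≠ 0) v n
      rwa [Real.norm_eq_abs] at this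
    nlinarith [abs_nonneg (x n), abs_nonneg (v n)]
  have htot : ‖∑' n, (((x n + v n)^2)^(σ+1) - (x n ^2)^(σ+1)
      - (2*σ+2) * ((x n ^ 2) ^ σ * x n * v n))‖ ≤ K * ‖v‖^2 := by
    have hKs : HasSum (fun n => K * v n ^ 2) (K * ‖v‖^2) := by
      rw [norm_sq_lp]
      exact (summable_sq v).hasSum.mul_left K
    exact tsum_of_norm_bounded hKs hbnd
  refine le_trans htot ?_
  have h2 : K * ‖v‖ ≤ c := by
    rcases le_or_gt K 0 with hK0 | hK0
    · have : K * ‖v‖ ≤ 0 := mul_nonpos_of_nonpos_of_nonneg hK0 (norm_nonneg v)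
      linarith
    · have h1 := mul_le_mul_of_nonneg_left hv2 hK0.le
      have h3 : K * (c / (K+1)) ≤ c := by
        rw [mul_div_assoc', div_le_iff₀ (by linarith)]
        nlinarith
      linarith
  calc K * ‖v‖^2 = (K * ‖v‖) * ‖v‖ := by ring
    _ ≤ c * ‖v‖ := mul_le_mul_of_nonneg_right h2 (norm_nonneg v)

/-! ### Energy identities -/

lemma inner_mulV_eq (V : ZLat d → ℝ) (CV : ℝ) (hVbdd : ∀ n, |V n| ≤ CV) (x y : H) :
    (inner ℝ (mulVCLM V CV hVbdd x) y : ℝ) = ∑' n, y n * (V n * x n) := by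
  rw [inner_lp_eq]
  exact tsum_congr fun n => by simp [mulVCLM_apply]; ring

lemma summable_Vmul (V : ZLat d → ℝ) (CV : ℝ) (hVbdd : ∀ n, |V n| ≤ CV) (x y : H) :
    Summable (fun n => y n * (V n * x n)) := by
  have := summable_mul_lp (mulVCLM V CV hVbdd x) y
  exact this.congr fun n => by simp [mulVCLM_apply]; ring

lemma summable_wmul (σ : ℝ) (hσ : 0 < σ) (x y : H) :
    Summable (fun n => y n * ((x n ^ 2) ^ σ * x n)) := by
  have := summable_mul_lp (wNL σ hσ x) y
  exact this.congr fun n => by simp [wNL_apply]; ring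

lemma energy_eq (h σ : ℝ) (hσ : 0 < σ) (V : ZLat d → ℝ) (CV : ℝ)
    (hVbdd : ∀ n, |V n| ≤ CV) (x y : H) :
    energyKG d h σ (-1) V (⇑x) (⇑y)
      = (1/2) * (inner ℝ y y : ℝ)
        + (1/(2*h^2)) * ∑ j : Fin d,
            (inner ℝ ((shiftCLM (latE j) - 1) x) ((shiftCLM (latE j) - 1) x) : ℝ)
        + (1/2) * (inner ℝ (mulVCLM V CV hVbdd x) x : ℝ)
        - (1/(2*σ+2)) * ∑' n, ((x n)^2)^(σ+1) := by
  have hσ1 : σ + 1 ≠ 0 := by linarith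
  have hσ2 : 2*σ + 2 ≠ 0 := by linarith
  have s1 : Summable (fun n => (y n)^2) := summable_sq y
  have sA2 : ∀ j : Fin d, Summable (fun n => (x (n + latE j) - x n)^2) := fun j =>
    (summable_sq ((shiftCLM (latE j) - 1) x)).congr fun n => by
      simp [ContinuousLinearMap.sub_apply]
  have s2 : Summable (fun n => (∑ j : Fin d, (x (n + latE j) - x n)^2)/h^2) :=
    (summable_sum (fun j _ => sA2 j)).div_const _
  have s3 : Summable (fun n => V n * x n ^ 2) :=
    (summable_Vmul V CV hVbdd x x).congr fun n => by ring
  have s4 : Summable (fun n => (-1/(σ+1)) * |x n| ^ (2*σ+2)) :=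
    (((summable_phi σ hσ x).congr fun n => (abs_rpow_two_mul_add σ (x n)).symm).mul_left _)
  rw [energyKG]
  rw [show (fun n : ZLat d => (y n ^ 2 + (∑ j : Fin d, (x (n + latE j) - x n) ^ 2) / h ^ 2
      + V n * x n ^ 2 + (-1 / (σ + 1)) * |x n| ^ (2 * σ + 2)))
    = fun n : ZLat d => ((y n ^ 2 + (∑ j : Fin d, (x (n + latE j) - x n) ^ 2) / h ^ 2
      + V n * x n ^ 2) + (-1 / (σ + 1)) * |x n| ^ (2 * σ + 2)) from rfl]
  rw [Summable.tsum_add ((s1.add s2).add s3) s4, Summable.tsum_add (s1.add s2) s3, Summable.tsum_add s1 s2]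
  have t1 : ∑' n, (y n)^2 = (inner ℝ y y : ℝ) := (inner_self_lp y).symm
  have t2 : ∑' n, (∑ j : Fin d, (x (n + latE j) - x n)^2)/h^2
      = (∑ j : Fin d, (inner ℝ ((shiftCLM (latE j) - 1) x) ((shiftCLM (latE j) - 1) x) : ℝ))/h^2 := by
    rw [tsum_div_const, Summable.tsum_finsetSum (fun j _ => sA2 j)]
    congr 1
    refine Finset.sum_congr rfl fun j _ => ?_
    rw [inner_self_lp]
    exact tsum_congr fun n => by simp [ContinuousLinearMap.sub_apply]
  have t3 : ∑' n, V n * x n ^ 2 = (inner ℝ (mulVCLM V CV hVbdd x) x : ℝ) := by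
    rw [inner_mulV_eq]
    exact tsum_congr fun n => by ring
  have t4 : ∑' n, (-1/(σ+1)) * |x n| ^ (2*σ+2) = (-1/(σ+1)) * ∑' n, ((x n)^2)^(σ+1) := by
    rw [← tsum_mul_left]
    exact tsum_congr fun n => by rw [abs_rpow_two_mul_add]
  rw [t1, t2, t3, t4]
  field_simp
  ring

lemma energy_deriv_zero (h σ : ℝ) (hσ : 0 < σ) (hh : h ≠ 0) (V : ZLat d → ℝ) (CV : ℝ)
    (hVbdd : ∀ n, |V n| ≤ CV) (x y z : H)
    (hpde : ∀ n, z n - discLapR d h (⇑x) n + V n * x n + (-1) * |x n| ^ (2*σ) * x n = 0) :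
    (1/2) * ((inner ℝ y z : ℝ) + (inner ℝ z y : ℝ))
      + (1/(2*h^2)) * ∑ j : Fin d,
          ((inner ℝ ((shiftCLM (latE j) - 1) x) ((shiftCLM (latE j) - 1) y) : ℝ)
            + (inner ℝ ((shiftCLM (latE j) - 1) y) ((shiftCLM (latE j) - 1) x) : ℝ))
      + (1/2) * ((inner ℝ (mulVCLM V CV hVbdd x) y : ℝ) + (inner ℝ (mulVCLM V CV hVbdd y) x : ℝ))
      - (1/(2*σ+2)) * (((2*σ+2) • (innerSL ℝ (wNL σ hσ x))) y) = 0 := by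
  have hσ2 : (2*σ+2 : ℝ) ≠ 0 := by linarith
  have E1 : (inner ℝ z y : ℝ) = (inner ℝ y z : ℝ) := (real_inner_comm z y).symm
  have hsum2 : ∑ j : Fin d,
      ((inner ℝ ((shiftCLM (latE j) - 1) x) ((shiftCLM (latE j) - 1) y) : ℝ)
        + (inner ℝ ((shiftCLM (latE j) - 1) y) ((shiftCLM (latE j) - 1) x) : ℝ))
      = 2 * ∑ j : Fin d,
          (inner ℝ ((shiftCLM (latE j) - 1) x) ((shiftCLM (latE j) - 1) y) : ℝ) := by
    rw [Finset.mul_sum]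
    refine Finset.sum_congr rfl fun j _ => ?_
    rw [real_inner_comm ((shiftCLM (latE j) - 1) y) ((shiftCLM (latE j) - 1) x), two_mul]
  have E3 : (inner ℝ (mulVCLM V CV hVbdd y) x : ℝ) = (inner ℝ (mulVCLM V CV hVbdd x) y : ℝ) := by
    rw [inner_mulV_eq, inner_mulV_eq]
    exact tsum_congr fun n => by ring
  have E4 : (((2*σ+2) • (innerSL ℝ (wNL σ hσ x))) y)
      = (2*σ+2) * ∑' n, y n * ((x n ^ 2) ^ σ * x n) := by
    rw [ContinuousLinearMap.smul_apply, innerSL_apply_apply, inner_lp_eq, smul_eq_mul]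
    congr 1
    exact tsum_congr fun n => by simp [wNL_apply]; ring
  rw [E1, hsum2, E3, E4]
  have hinyz : (inner ℝ y z : ℝ) = ∑' n, y n * z n := inner_lp_eq y z
  have hlap : (∑ j : Fin d,
      (inner ℝ ((shiftCLM (latE j) - 1) x) ((shiftCLM (latE j) - 1) y) : ℝ))/h^2
      = - ∑' n, y n * discLapR d h (⇑x) n := sum_inner_Adiff x y h hh
  have hV : (inner ℝ (mulVCLM V CV hVbdd x) y : ℝ) = ∑' n, y n * (V n * x n) :=
    inner_mulV_eq V CV hVbdd x y
  have sz : Summable (fun n => y n * z n) := summable_mul_lp y z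
  have sl : Summable (fun n => y n * discLapR d h (⇑x) n) := summable_mul_lap x y h
  have sv : Summable (fun n => y n * (V n * x n)) := summable_Vmul V CV hVbdd x y
  have sw : Summable (fun n => y n * ((x n ^ 2) ^ σ * x n)) := summable_wmul σ hσ x y
  have key : (∑' n, y n * z n) - (∑' n, y n * discLapR d h (⇑x) n)
      + (∑' n, y n * (V n * x n)) - (∑' n, y n * ((x n ^ 2) ^ σ * x n)) = 0 := by
    rw [← Summable.tsum_sub sz sl, ← Summable.tsum_add (sz.sub sl) sv, ← Summable.tsum_sub ((sz.sub sl).add sv) sw]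
    rw [show (0:ℝ) = ∑' (_ : ZLat d), (0:ℝ) by rw [tsum_zero]]
    refine tsum_congr fun n => ?_
    have h1 := hpde n
    have h2 : |x n| ^ (2*σ) = (x n ^ 2) ^ σ := abs_rpow_two_mul σ (x n)
    rw [h2] at h1
    linear_combination (y n : ℝ) * h1
  -- combine
  have hh2 : (h:ℝ)^2 ≠ 0 := pow_ne_zero 2 hh
  have expand : (1/2) * ((∑' n, y n * z n) + (∑' n, y n * z n))
      + (1/(2*h^2)) * (2 * (- (h^2) * ∑' n, y n * discLapR d h (⇑x) n))
      + (1/2) * ((∑' n, y n * (V n * x n)) + (∑' n, y n * (V n * x n)))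
      - (1/(2*σ+2)) * ((2*σ+2) * ∑' n, y n * ((x n ^ 2) ^ σ * x n)) = 0 := by
    have c1 : ∀ A : ℝ, (1/2) * (A + A) = A := fun A => by ring
    have c2 : ∀ B : ℝ, (1/(2*h^2)) * (2 * (-(h^2) * B)) = -B := fun B => by
      field_simp
    have c3 : ∀ C : ℝ, (1/(2*σ+2)) * ((2*σ+2) * C) = C := fun C => by
      field_simp
    rw [c1, c2, c1, c3]
    linarith [key]
  have hlap' : ∑ j : Fin d,
      (inner ℝ ((shiftCLM (latE j) - 1) x) ((shiftCLM (latE j) - 1) y) : ℝ)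
      = - (h^2) * ∑' n, y n * discLapR d h (⇑x) n := by
    have h2 := (div_eq_iff hh2).1 hlap
    rw [h2]
    ring
  rw [hinyz, hlap', hV]
  exact expand

lemma inner_xz (h σ : ℝ) (hσ : 0 < σ) (hh : h ≠ 0) (V : ZLat d → ℝ) (CV : ℝ)
    (hVbdd : ∀ n, |V n| ≤ CV) (x z : H)
    (hpde : ∀ n, z n - discLapR d h (⇑x) n + V n * x n + (-1) * |x n| ^ (2*σ) * x n = 0) :
    (inner ℝ x z : ℝ)
      = -((∑ j : Fin d,
            (inner ℝ ((shiftCLM (latE j) - 1) x) ((shiftCLM (latE j) - 1) x) : ℝ))/h^2)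
        - (inner ℝ (mulVCLM V CV hVbdd x) x : ℝ) + ∑' n, ((x n)^2)^(σ+1) := by
  have sz : Summable (fun n => x n * z n) := summable_mul_lp x z
  have sl : Summable (fun n => x n * discLapR d h (⇑x) n) := summable_mul_lap x x h
  have sv : Summable (fun n => x n * (V n * x n)) := summable_Vmul V CV hVbdd x x
  have sp : Summable (fun n => ((x n)^2)^(σ+1)) := summable_phi σ hσ x
  have hterm : ∀ n, x n * z n
      = x n * discLapR d h (⇑x) n - x n * (V n * x n) + ((x n)^2)^(σ+1) := by
    intro n
    have h1 := hpde n
    rw [abs_rpow_two_mul σ (x n)] at h1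
    have hrp : ((x n)^2)^(σ+1) = ((x n)^2)^σ * (x n)^2 :=
      rpow_succ_eq σ _ hσ (sq_nonneg _)
    linear_combination (x n : ℝ) * h1 - hrp
  have hsplit : (inner ℝ x z : ℝ)
      = (∑' n, x n * discLapR d h (⇑x) n) - (∑' n, x n * (V n * x n))
        + ∑' n, ((x n)^2)^(σ+1) := by
    rw [inner_lp_eq, ← Summable.tsum_sub sl sv, ← Summable.tsum_add (sl.sub sv) sp]
    exact tsum_congr fun n => by rw [hterm n]
  have hlap := sum_inner_Adiff x x h hh
  have hV : (inner ℝ (mulVCLM V CV hVbdd x) x : ℝ) = ∑' n, x n * (V n * x n) :=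
    inner_mulV_eq V CV hVbdd x x
  rw [hsplit, hV, ← neg_eq_iff_eq_neg.2 hlap]

/-- **Convexity inequality for the variance functional in the focusing discrete Klein–Gordon
equation.** If `λ = −1`, `inf_n V_n > 0`, `V` bounded, and the real-valued datum
`(f,g) ∈ l²_h × l²_h` has negative energy, then for any twice continuously differentiable
solution `u` on `[0,T)`, the function `I(t) = Σ_n u_n(t)²` is twice differentiable on `[0,T)`
and `I''(t) ≥ (4+2σ) Σ_n (∂_t u_n(t))²` there. -/
theorem dkg_focusing_variance_convexity
    (d : ℕ) (hd : 1 ≤ d) (h : ℝ) (hh : 0 < h) (σ : ℝ) (hσ : 0 < σ)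
    (V : ZLat d → ℝ) (CV : ℝ) (hVbdd : ∀ n, |V n| ≤ CV)
    (c : ℝ) (hc : 0 < c) (hVlow : ∀ n, c ≤ V n)
    (f g : lp (fun _ : ZLat d => ℝ) 2)
    (hE : energyKG d h σ (-1) V (⇑f) (⇑g) < 0)
    (T : ℝ) (u u' u'' : ℝ → lp (fun _ : ZLat d => ℝ) 2)
    (hsol : IsDKGSolutionOn d h σ (-1) V 2 (Set.Ico 0 T) u u' u'')
    (hf : u 0 = f) (hg : u' 0 = g) :
    ∃ I' I'' : ℝ → ℝ,
      (∀ t ∈ Set.Ico (0 : ℝ) T,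
        HasDerivWithinAt (fun s => ∑' n : ZLat d, ((u s : ZLat d → ℝ) n) ^ 2) (I' t)
          (Set.Ico (0 : ℝ) T) t) ∧
      (∀ t ∈ Set.Ico (0 : ℝ) T,
        HasDerivWithinAt I' (I'' t) (Set.Ico (0 : ℝ) T) t) ∧
      (∀ t ∈ Set.Ico (0 : ℝ) T,
        (4 + 2 * σ) * ∑' n : ZLat d, ((u' t : ZLat d → ℝ) n) ^ 2 ≤ I'' t) := by
  obtain ⟨hu, hu', hu''c, heq⟩ := hsol
  have hh0 : h ≠ 0 := hh.ne'
  refine ⟨fun t => (inner ℝ (u t) (u' t) : ℝ) + (inner ℝ (u' t) (u t) : ℝ),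
    fun t => ((inner ℝ (u t) (u'' t) : ℝ) + (inner ℝ (u' t) (u' t) : ℝ))
      + ((inner ℝ (u' t) (u' t) : ℝ) + (inner ℝ (u'' t) (u t) : ℝ)), ?_, ?_, ?_⟩
  · intro t ht
    have hfun : (fun s => ∑' n : ZLat d, ((u s : ZLat d → ℝ) n) ^ 2)
        = fun s => (inner ℝ (u s) (u s) : ℝ) := funext fun s => (inner_self_lp (u s)).symm
    rw [hfun]
    exact (hu t ht).inner ℝ (hu t ht)
  · intro t ht
    exact ((hu t ht).inner ℝ (hu' t ht)).add ((hu' t ht).inner ℝ (hu t ht))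
  · intro t ht
    beta_reduce
    -- energy conservation
    set S := Set.Ico (0:ℝ) T with hSdef
    set En : ℝ → ℝ := fun s =>
      (1/2) * (inner ℝ (u' s) (u' s) : ℝ)
      + (1/(2*h^2)) * ∑ j : Fin d,
          (inner ℝ ((shiftCLM (latE j) - 1) (u s)) ((shiftCLM (latE j) - 1) (u s)) : ℝ)
      + (1/2) * (inner ℝ (mulVCLM V CV hVbdd (u s)) (u s) : ℝ)
      - (1/(2*σ+2)) * ∑' n, (((u s : ZLat d → ℝ) n)^2)^(σ+1) with hEndef
    have hEderiv : ∀ s ∈ S, HasDerivWithinAt En 0 S s := by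
      intro s hs
      have h1 : HasDerivWithinAt (fun r => (1/2) * (inner ℝ (u' r) (u' r) : ℝ))
          ((1/2) * ((inner ℝ (u' s) (u'' s) : ℝ) + (inner ℝ (u'' s) (u' s) : ℝ))) S s :=
        ((hu' s hs).inner ℝ (hu' s hs)).const_mul (1/2)
      have h2 : HasDerivWithinAt (fun r => (1/(2*h^2)) * ∑ j : Fin d,
          (inner ℝ ((shiftCLM (latE j) - 1) (u r)) ((shiftCLM (latE j) - 1) (u r)) : ℝ))
          ((1/(2*h^2)) * ∑ j : Fin d,
            ((inner ℝ ((shiftCLM (latE j) - 1) (u s)) ((shiftCLM (latE j) - 1) (u' s)) : ℝ)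
              + (inner ℝ ((shiftCLM (latE j) - 1) (u' s)) ((shiftCLM (latE j) - 1) (u s)) : ℝ)))
          S s := by
        refine HasDerivWithinAt.const_mul _ (HasDerivWithinAt.fun_sum fun j _ => ?_)
        have hAj : HasDerivWithinAt (fun r => (shiftCLM (latE j) - 1) (u r))
            ((shiftCLM (latE j) - 1) (u' s)) S s :=
          (shiftCLM (latE j) - 1).hasFDerivAt.comp_hasDerivWithinAt s (hu s hs)
        exact hAj.inner ℝ hAj
      have h3 : HasDerivWithinAt (fun r => (1/2) * (inner ℝ (mulVCLM V CV hVbdd (u r)) (u r) : ℝ))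
          ((1/2) * ((inner ℝ (mulVCLM V CV hVbdd (u s)) (u' s) : ℝ)
            + (inner ℝ (mulVCLM V CV hVbdd (u' s)) (u s) : ℝ))) S s := by
        have hMV : HasDerivWithinAt (fun r => mulVCLM V CV hVbdd (u r))
            (mulVCLM V CV hVbdd (u' s)) S s :=
          (mulVCLM V CV hVbdd).hasFDerivAt.comp_hasDerivWithinAt s (hu s hs)
        exact (hMV.inner ℝ (hu s hs)).const_mul (1/2)
      have h4 : HasDerivWithinAt (fun r => (1/(2*σ+2)) * ∑' n, (((u r : ZLat d → ℝ) n)^2)^(σ+1))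
          ((1/(2*σ+2)) * (((2*σ+2) • (innerSL ℝ (wNL σ hσ (u s)))) (u' s))) S s := by
        have hΦ := (hasFDerivAt_Phi σ hσ (u s)).comp_hasDerivWithinAt s (hu s hs)
        exact hΦ.const_mul (1/(2*σ+2))
      have htot := ((h1.add h2).add h3).sub h4
      have hzero := energy_deriv_zero h σ hσ hh0 V CV hVbdd (u s) (u' s) (u'' s) (heq s hs)
      rw [hEndef]
      refine htot.congr_deriv ?_
      rw [show ((1:ℝ)/2) * ((inner ℝ (u' s) (u'' s) : ℝ) + (inner ℝ (u'' s) (u' s) : ℝ))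
          + (1/(2*h^2)) * ∑ j : Fin d,
            ((inner ℝ ((shiftCLM (latE j) - 1) (u s)) ((shiftCLM (latE j) - 1) (u' s)) : ℝ)
              + (inner ℝ ((shiftCLM (latE j) - 1) (u' s)) ((shiftCLM (latE j) - 1) (u s)) : ℝ))
          + (1/2) * ((inner ℝ (mulVCLM V CV hVbdd (u s)) (u' s) : ℝ)
            + (inner ℝ (mulVCLM V CV hVbdd (u' s)) (u s) : ℝ))
          - (1/(2*σ+2)) * (((2*σ+2) • (innerSL ℝ (wNL σ hσ (u s)))) (u' s)) = 0 from hzero]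
    have h0S : (0:ℝ) ∈ S := ⟨le_refl 0, lt_of_le_of_lt ht.1 ht.2⟩
    have hcons : En t = En 0 := by
      have hb := (convex_Ico (0:ℝ) T).norm_image_sub_le_of_norm_hasDerivWithin_le
        (f := En) (f' := fun _ => (0:ℝ)) (C := 0) (fun s hs => hEderiv s hs)
        (fun s hs => by norm_num) h0S ht
      rw [Real.norm_eq_abs] at hb
      have := abs_nonneg (En t - En 0)
      have h0 : |En t - En 0| = 0 := le_antisymm (by simpa using hb) this
      have := abs_eq_zero.1 h0
      linarith
    have hE0 : En 0 = energyKG d h σ (-1) V (⇑f) (⇑g) := by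
      rw [hEndef]
      simp only [hf, hg]
      exact (energy_eq h σ hσ V CV hVbdd f g).symm
    -- notation
    set a : ℝ := (inner ℝ (u' t) (u' t) : ℝ) with ha_def
    set b : ℝ := ∑ j : Fin d,
      (inner ℝ ((shiftCLM (latE j) - 1) (u t)) ((shiftCLM (latE j) - 1) (u t)) : ℝ) with hb_def
    set p : ℝ := (inner ℝ (mulVCLM V CV hVbdd (u t)) (u t) : ℝ) with hp_def
    set q : ℝ := ∑' n, (((u t : ZLat d → ℝ) n)^2)^(σ+1) with hq_def
    set E0 : ℝ := energyKG d h σ (-1) V (⇑f) (⇑g) with hE0_def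
    have hrel : (1/2) * a + (1/(2*h^2)) * b + (1/2) * p - (1/(2*σ+2)) * q = E0 := by
      rw [← hE0, ← hcons, hEndef]
    have hxz : (inner ℝ (u t) (u'' t) : ℝ) = -(b/h^2) - p + q :=
      inner_xz h σ hσ hh0 V CV hVbdd (u t) (u'' t) (heq t ht)
    have ha : 0 ≤ a := real_inner_self_nonneg
    have hb : 0 ≤ b := Finset.sum_nonneg fun j _ => real_inner_self_nonneg
    have hp : 0 ≤ p := by
      rw [hp_def, inner_mulV_eq]
      refine tsum_nonneg fun n => ?_
      have h1 : 0 ≤ V n := le_trans hc.le (hVlow n)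
      nlinarith [sq_nonneg ((u t : ZLat d → ℝ) n)]
    have hgoal_lhs : ∑' n : ZLat d, ((u' t : ZLat d → ℝ) n) ^ 2 = a := (inner_self_lp (u' t)).symm
    rw [hgoal_lhs]
    have hcomm : (inner ℝ (u'' t) (u t) : ℝ) = (inner ℝ (u t) (u'' t) : ℝ) :=
      real_inner_comm (u t) (u'' t)
    rw [hcomm, hxz]
    -- from the energy relation, express q
    have hh2 : (0:ℝ) < h^2 := by positivity
    have hσ2 : (2*σ+2 : ℝ) ≠ 0 := by linarith
    set B : ℝ := b / h^2 with hB_def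
    have hBnn : 0 ≤ B := div_nonneg hb hh2.le
    have hbb : (1/(2*h^2)) * b = (1/2) * B := by
      rw [hB_def]
      field_simp
    have hqq : (1/(2*σ+2)) * q = (1/2)*a + (1/2)*B + (1/2)*p - E0 := by
      rw [← hbb]; linarith
    have hq : q = (2*σ+2) * ((1/2)*a + (1/2)*B + (1/2)*p - E0) := by
      rw [← hqq]
      field_simp
    clear_value a b p q E0 B
    rw [hq]
    linarith only [mul_nonneg hσ.le hBnn, mul_nonneg hσ.le hp, mul_pos hσ (neg_pos.2 hE),
      mul_nonneg hσ.le ha, hE, hBnn, hp, ha, hσ]
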